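/- Let s₁^+, s₁^−, s₂^+, s₂^− be points of ℝ³ satisfying |s₁^+ − s₁^−| + |s₂^+ − s₂^−| ≤ |s₁^+ − s₂^−| + |s₂^+ − s₁^−|, and for m = 1, 2 let L_m be the closed line segment joining s_m^+ and s_m^−. Then dist(L₁, L₂) ≥ (1/√2) · min{ dist(s_m^σ, L_n) : m ≠ n, m,n ∈ {1,2}, σ ∈ {+,−} }. -/
import Mathlib


open Set Metric

open RealInnerProductSpace

noncomputable section

abbrev E3 : Type := EuclideanSpace ℝ (Fin 3)

/-- The (infimal) Euclidean distance between two subsets of `ℝ³`. -/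
def setDist (S T : Set E3) : ℝ :=
  sInf ((fun p : E3 × E3 => dist p.1 p.2) '' (S ×ˢ T))

lemma norm_comb_sq {u v w : E3} {t d : ℝ} (hu : ‖u‖ = 1) (hv : ‖v‖ = 1)
    (huv : ⟪u, v⟫ = t) (hwu : ⟪u, w⟫ = 0) (hwv : ⟪v, w⟫ = 0) (hw : ‖w‖ = d)
    (α β γ : ℝ) :
    ‖α • u + β • v + γ • w‖ ^ 2 = α^2 + β^2 + 2*α*β*t + γ^2 * d^2 := by
  have h1 : ⟪u,u⟫ = 1 := by rw [real_inner_self_eq_norm_sq, hu]; norm_num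
  have h2 : ⟪v,v⟫ = 1 := by rw [real_inner_self_eq_norm_sq, hv]; norm_num
  have h3 : ⟪w,w⟫ = d^2 := by rw [real_inner_self_eq_norm_sq, hw]
  have h4 : ⟪v,u⟫ = t := by rw [real_inner_comm]; exact huv
  have h5 : ⟪w,u⟫ = 0 := by rw [real_inner_comm]; exact hwu
  have h6 : ⟪w,v⟫ = 0 := by rw [real_inner_comm]; exact hwv
  rw [← real_inner_self_eq_norm_sq]
  simp only [inner_add_left, inner_add_right, real_inner_smul_left, real_inner_smul_right,
    h1, h2, h3, h4, h5, h6, huv, hwu, hwv]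
  ring

lemma perp_of_min {w u : E3} {δ₁ δ₂ : ℝ} (h1 : 0 < δ₁) (h2 : 0 < δ₂)
    (hmin : ∀ s : ℝ, -δ₁ ≤ s → s ≤ δ₂ → ‖w‖^2 ≤ ‖w - s • u‖^2) :
    ⟪w, u⟫ = 0 := by
  set k := ⟪w, u⟫ with hk
  set U := ‖u‖^2 with hUdef
  have hU : 0 ≤ U := sq_nonneg _
  have key : ∀ s : ℝ, -δ₁ ≤ s → s ≤ δ₂ → 0 ≤ -2*s*k + s^2*U := by
    intro s hs1 hs2
    have h := hmin s hs1 hs2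
    have hexp : ‖w - s • u‖^2 = ‖w‖^2 - 2*(s*k) + s^2*U := by
      rw [norm_sub_sq_real, real_inner_smul_right, norm_smul]
      rw [Real.norm_eq_abs, mul_pow, sq_abs, hUdef, hk]
    rw [hexp] at h
    linarith
  set ε : ℝ := min (min δ₁ δ₂ / (|k| + 1)) (1/(U+1)) with hε
  have habs : 0 ≤ |k| := abs_nonneg k
  have hεpos : 0 < ε := by
    apply lt_min
    · positivity
    · positivity
  have hεk1 : ε * |k| ≤ min δ₁ δ₂ := by
    have h3 : ε ≤ min δ₁ δ₂ / (|k| + 1) := min_le_left _ _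
    have h4 : ε * |k| ≤ (min δ₁ δ₂ / (|k| + 1)) * |k| :=
      mul_le_mul_of_nonneg_right h3 habs
    have h5 : (min δ₁ δ₂ / (|k| + 1)) * |k| ≤ min δ₁ δ₂ := by
      rw [div_mul_eq_mul_div, div_le_iff₀ (by positivity)]
      have : 0 ≤ min δ₁ δ₂ := le_of_lt (lt_min h1 h2)
      nlinarith
    linarith
  have hεU : ε * U < 2 := by
    have h3 : ε ≤ 1/(U+1) := min_le_right _ _
    have h4 : ε * U ≤ (1/(U+1)) * U := mul_le_mul_of_nonneg_right h3 hU
    have h5 : (1/(U+1)) * U < 2 := by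
      rw [div_mul_eq_mul_div, one_mul, div_lt_iff₀ (by positivity)]
      linarith
    linarith
  have hb1 : -δ₁ ≤ ε * k := by
    have h3 : |ε * k| ≤ min δ₁ δ₂ := by rw [abs_mul, abs_of_pos hεpos]; exact hεk1
    have h4 := (abs_le.mp h3).1
    have := min_le_left δ₁ δ₂
    linarith
  have hb2 : ε * k ≤ δ₂ := by
    have h3 : |ε * k| ≤ min δ₁ δ₂ := by rw [abs_mul, abs_of_pos hεpos]; exact hεk1
    have h4 := (abs_le.mp h3).2
    have := min_le_right δ₁ δ₂
    linarith
  have h6 := key (ε * k) hb1 hb2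
  by_contra hk0
  have hk2 : 0 < k^2 := by positivity
  have h8 : 0 < ε * k^2 := mul_pos hεpos hk2
  nlinarith [h6, mul_pos h8 (show (0:ℝ) < 2 - ε*U by linarith)]

lemma mem_seg {q v : E3} {s c e : ℝ} (h1 : -e ≤ s) (h2 : s ≤ c) :
    q + s • v ∈ segment ℝ (q - e • v) (q + c • v) := by
  have hce : 0 ≤ c + e := by linarith
  rcases eq_or_lt_of_le hce with h | h
  · have hsc : s = c := by linarith
    rw [hsc]
    exact right_mem_segment _ _ _
  · rw [segment_eq_image']
    refine ⟨(s+e)/(c+e), ⟨div_nonneg (by linarith) h.le, ?_⟩, ?_⟩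
    · rw [div_le_one h]; linarith
    · have hv : (q + c • v) - (q - e • v) = (c+e) • v := by module
      dsimp only
      rw [hv, smul_smul, div_mul_cancel₀ _ (ne_of_gt h)]
      module

lemma infDist_le_sqrt_two_mul {x z : E3} {S : Set E3} {d : ℝ} (hd : 0 ≤ d)
    (hz : z ∈ S) (h : dist x z ^ 2 ≤ 2 * d ^ 2) :
    infDist x S ≤ Real.sqrt 2 * d := by
  have h1 : infDist x S ≤ dist x z := infDist_le_dist_of_mem hz
  have h2 : dist x z ≤ Real.sqrt 2 * d := by
    have e1 : Real.sqrt 2 * d = Real.sqrt (2 * d^2) := by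
      rw [Real.sqrt_mul (by norm_num), Real.sqrt_sq hd]
    have e2 : dist x z = Real.sqrt (dist x z ^ 2) := (Real.sqrt_sq dist_nonneg).symm
    rw [e1, e2]
    exact Real.sqrt_le_sqrt h
  linarith

lemma exists_min (x₁ y₁ x₂ y₂ : E3) :
    ∃ p ∈ segment ℝ x₁ y₁, ∃ q ∈ segment ℝ x₂ y₂,
      sInf ((fun p : E3 × E3 => dist p.1 p.2) '' ((segment ℝ x₁ y₁) ×ˢ (segment ℝ x₂ y₂)))
        = dist p q ∧
      ∀ x ∈ segment ℝ x₁ y₁, ∀ y ∈ segment ℝ x₂ y₂, dist p q ≤ dist x y := by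
  have hK : IsCompact ((segment ℝ x₁ y₁) ×ˢ (segment ℝ x₂ y₂)) := by
    apply IsCompact.prod <;>
    · rw [segment_eq_image']
      exact isCompact_Icc.image (by continuity)
  have hne : ((segment ℝ x₁ y₁) ×ˢ (segment ℝ x₂ y₂)).Nonempty :=
    ⟨(x₁, x₂), left_mem_segment _ _ _, left_mem_segment _ _ _⟩
  obtain ⟨z, hz, hmin⟩ := hK.exists_isMinOn hne (continuous_dist.continuousOn)
  rw [isMinOn_iff] at hmin
  refine ⟨z.1, hz.1, z.2, hz.2, ?_, ?_⟩
  · refine IsLeast.csInf_eq ⟨⟨z, hz, rfl⟩, ?_⟩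
    rintro y ⟨a, ha, rfl⟩
    exact hmin a ha
  · intro x hx y hy
    exact hmin (x, y) (Set.mk_mem_prod hx hy)

set_option maxHeartbeats 1000000 in
lemma core (p q u v w : E3) (a b c e t d : ℝ)
    (ha : 0 ≤ a) (hb : 0 ≤ b) (hc : 0 ≤ c) (he : 0 ≤ e)
    (hu : ‖u‖ = 1) (hv : ‖v‖ = 1) (huv : ⟪u, v⟫ = t) (ht1 : |t| ≤ 1)
    (hw : w = q - p) (hwn : ‖w‖ = d)
    (hwu : ⟪u, w⟫ = 0) (hwv : ⟪v, w⟫ = 0)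
    (hkey : 2*a*e*(1-t) ≤ d^2) :
    infDist (p + a • u) (segment ℝ (q - e • v) (q + c • v)) ≤ Real.sqrt 2 * d ∨
    infDist (p - b • u) (segment ℝ (q - e • v) (q + c • v)) ≤ Real.sqrt 2 * d ∨
    infDist (q + c • v) (segment ℝ (p - b • u) (p + a • u)) ≤ Real.sqrt 2 * d ∨
    infDist (q - e • v) (segment ℝ (p - b • u) (p + a • u)) ≤ Real.sqrt 2 * d := by
  have hd0 : 0 ≤ d := hwn ▸ norm_nonneg w
  obtain ⟨htl, htr⟩ := abs_le.mp ht1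
  have dist_eval : ∀ (α β γ : ℝ) (x z : E3), x - z = α • u + β • v + γ • w →
      dist x z ^ 2 = α^2 + β^2 + 2*α*β*t + γ^2*d^2 := by
    intro α β γ x z hxz
    rw [dist_eq_norm, hxz, norm_comb_sq hu hv huv hwu hwv hwn]
  rcases le_total t 0 with ht0 | ht0
  · -- t ≤ 0 : easy case
    rcases le_total a e with hae | hae
    · left
      refine infDist_le_sqrt_two_mul hd0 (mem_seg (s := 0) (by linarith) hc) ?_
      rw [dist_eval a 0 (-1) _ _ (by rw [hw]; module)]
      nlinarith [mul_nonneg (mul_nonneg ha he) (neg_nonneg.mpr ht0),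
        mul_le_mul_of_nonneg_left hae ha]
    · right; right; right
      refine infDist_le_sqrt_two_mul hd0 (mem_seg (s := 0) (by linarith) ha) ?_
      rw [dist_eval 0 (-e) 1 _ _ (by rw [hw]; module)]
      nlinarith [mul_nonneg (mul_nonneg ha he) (neg_nonneg.mpr ht0),
        mul_le_mul_of_nonneg_left hae he]
  · -- 0 ≤ t
    rcases le_total a e with hae | hae
    · rcases le_or_gt (a*t) c with hatc | hatc
      · left
        have hat0 : 0 ≤ a*t := mul_nonneg ha ht0
        have hata : a*t ≤ a := by nlinarith
        have k1 : 0 ≤ (1-t) * (a * (2*e - a - a*t)) :=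
          mul_nonneg (by linarith) (mul_nonneg ha (by linarith))
        refine infDist_le_sqrt_two_mul hd0
          (mem_seg (s := a*t) (by linarith) hatc) ?_
        rw [dist_eval a (-(a*t)) (-1) _ _ (by rw [hw]; module)]
        nlinarith [hkey, k1]
      · right; right; left
        have hata : a*t ≤ a := by nlinarith
        have hca : c ≤ a := le_trans hatc.le hata
        have hce : c ≤ e := le_trans hca hae
        have hct0 : 0 ≤ c*t := mul_nonneg hc ht0
        have hctc : c*t ≤ c := by nlinarith
        have hcc : c*c ≤ a*e := mul_le_mul hca hce hc ha
        have k1 : 0 ≤ (1-t) * (2*a*e - c*c*(1+t)) :=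
          mul_nonneg (by linarith) (by nlinarith)
        refine infDist_le_sqrt_two_mul hd0
          (mem_seg (s := c*t) (by linarith) (by linarith)) ?_
        rw [dist_eval (-(c*t)) c 1 _ _ (by rw [hw]; module)]
        nlinarith [hkey, k1]
    · rcases le_or_gt (e*t) b with hetb | hetb
      · right; right; right
        have het0 : 0 ≤ e*t := mul_nonneg he ht0
        have hete : e*t ≤ e := by nlinarith
        have hee : e*e ≤ a*e := mul_le_mul_of_nonneg_right hae he
        have k1 : 0 ≤ (1-t) * (2*a*e - e*e*(1+t)) :=
          mul_nonneg (by linarith) (by nlinarith)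
        refine infDist_le_sqrt_two_mul hd0
          (mem_seg (s := -(e*t)) (by linarith) (by linarith)) ?_
        rw [dist_eval (e*t) (-e) 1 _ _ (by rw [hw]; module)]
        nlinarith [hkey, k1]
      · right; left
        have hete : e*t ≤ e := by nlinarith
        have hbe : b ≤ e := le_trans hetb.le hete
        have hba : b ≤ a := le_trans hbe hae
        have hbt0 : 0 ≤ b*t := mul_nonneg hb ht0
        have hbtb : b*t ≤ b := by nlinarith
        have hbb : b*b ≤ a*e := mul_le_mul hba hbe hb ha
        have k1 : 0 ≤ (1-t) * (2*a*e - b*b*(1+t)) :=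
          mul_nonneg (by linarith) (by nlinarith)
        refine infDist_le_sqrt_two_mul hd0
          (mem_seg (s := -(b*t)) (by linarith) (by linarith)) ?_
        rw [dist_eval (-b) (b*t) (-1) _ _ (by rw [hw]; module)]
        nlinarith [hkey, k1]

set_option maxHeartbeats 2000000 in
/-- **Lemma 4 of Baldo–Jerrard–Orlandi–Soner.**
Let `s₁⁺, s₁⁻, s₂⁺, s₂⁻ ∈ ℝ³` satisfy
`|s₁⁺ − s₁⁻| + |s₂⁺ − s₂⁻| ≤ |s₁⁺ − s₂⁻| + |s₂⁺ − s₁⁻|`, and for `m = 1,2` let `L_m`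
be the closed segment joining `s_m⁺` and `s_m⁻`.  Then
`dist(L₁, L₂) ≥ (1/√2) · min{dist(s_mᶟ, L_n) : m ≠ n, δ ∈ {+,−}}`. -/
theorem dist_between_segments_of_minimal_connection
    (s₁p s₁m s₂p s₂m : E3)
    (h : dist s₁p s₁m + dist s₂p s₂m ≤ dist s₁p s₂m + dist s₂p s₁m) :
    (1 / Real.sqrt 2) *
      min (min (infDist s₁p (segment ℝ s₂m s₂p)) (infDist s₁m (segment ℝ s₂m s₂p)))
          (min (infDist s₂p (segment ℝ s₁m s₁p)) (infDist s₂m (segment ℝ s₁m s₁p))) ≤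
      setDist (segment ℝ s₁m s₁p) (segment ℝ s₂m s₂p) := by
  obtain ⟨p, hp0, q, hq0, hEq, hmin⟩ := exists_min s₁m s₁p s₂m s₂p
  rw [setDist, hEq]
  set d := dist p q with hddef
  have hd0 : 0 ≤ d := dist_nonneg
  have hs2pos : (0:ℝ) < Real.sqrt 2 := by positivity
  have hs2 : (1:ℝ) ≤ Real.sqrt 2 := by
    rw [show (1:ℝ) = Real.sqrt 1 from Real.sqrt_one.symm]
    exact Real.sqrt_le_sqrt (by norm_num)
  suffices h4 : infDist s₁p (segment ℝ s₂m s₂p) ≤ Real.sqrt 2 * d ∨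
      infDist s₁m (segment ℝ s₂m s₂p) ≤ Real.sqrt 2 * d ∨
      infDist s₂p (segment ℝ s₁m s₁p) ≤ Real.sqrt 2 * d ∨
      infDist s₂m (segment ℝ s₁m s₁p) ≤ Real.sqrt 2 * d by
    have hA0 : 0 ≤ infDist s₁p (segment ℝ s₂m s₂p) := infDist_nonneg
    have hB0 : 0 ≤ infDist s₁m (segment ℝ s₂m s₂p) := infDist_nonneg
    have hC0 : 0 ≤ infDist s₂p (segment ℝ s₁m s₁p) := infDist_nonneg
    have hD0 : 0 ≤ infDist s₂m (segment ℝ s₁m s₁p) := infDist_nonneg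
    have hμ : min (min (infDist s₁p (segment ℝ s₂m s₂p)) (infDist s₁m (segment ℝ s₂m s₂p)))
          (min (infDist s₂p (segment ℝ s₁m s₁p)) (infDist s₂m (segment ℝ s₁m s₁p)))
        ≤ Real.sqrt 2 * d := by
      rcases h4 with h4 | h4 | h4 | h4
      · exact le_trans (le_trans (min_le_left _ _) (min_le_left _ _)) h4
      · exact le_trans (le_trans (min_le_left _ _) (min_le_right _ _)) h4
      · exact le_trans (le_trans (min_le_right _ _) (min_le_left _ _)) h4
      · exact le_trans (le_trans (min_le_right _ _) (min_le_right _ _)) h4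
    calc (1 / Real.sqrt 2) *
        min (min (infDist s₁p (segment ℝ s₂m s₂p)) (infDist s₁m (segment ℝ s₂m s₂p)))
          (min (infDist s₂p (segment ℝ s₁m s₁p)) (infDist s₂m (segment ℝ s₁m s₁p)))
        ≤ (1 / Real.sqrt 2) * (Real.sqrt 2 * d) := by
          apply mul_le_mul_of_nonneg_left hμ; positivity
      _ = d := by
          rw [← mul_assoc, one_div, inv_mul_cancel₀ (ne_of_gt hs2pos), one_mul]
  -- endpoint cases
  by_cases hP1 : p = s₁m
  · right; left
    have h1 : infDist s₁m (segment ℝ s₂m s₂p) ≤ dist s₁m q := infDist_le_dist_of_mem hq0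
    have h2 : dist s₁m q = d := by rw [← hP1]
    nlinarith [mul_le_mul_of_nonneg_right hs2 hd0]
  by_cases hP2 : p = s₁p
  · left
    have h1 : infDist s₁p (segment ℝ s₂m s₂p) ≤ dist s₁p q := infDist_le_dist_of_mem hq0
    have h2 : dist s₁p q = d := by rw [← hP2]
    nlinarith [mul_le_mul_of_nonneg_right hs2 hd0]
  by_cases hQ1 : q = s₂m
  · right; right; right
    have h1 : infDist s₂m (segment ℝ s₁m s₁p) ≤ dist s₂m p := infDist_le_dist_of_mem hp0
    have h2 : dist s₂m p = d := by rw [← hQ1, dist_comm]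
    nlinarith [mul_le_mul_of_nonneg_right hs2 hd0]
  by_cases hQ2 : q = s₂p
  · right; right; left
    have h1 : infDist s₂p (segment ℝ s₁m s₁p) ≤ dist s₂p p := infDist_le_dist_of_mem hp0
    have h2 : dist s₂p p = d := by rw [← hQ2, dist_comm]
    nlinarith [mul_le_mul_of_nonneg_right hs2 hd0]
  -- interior case
  have hp' := hp0
  have hq' := hq0
  rw [segment_eq_image'] at hp' hq'
  obtain ⟨r, ⟨hr0, hr1⟩, hpe⟩ := hp'
  obtain ⟨ρ, ⟨hρ0, hρ1⟩, hqe⟩ := hq'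
  dsimp only at hpe hqe
  have hu0 : s₁p - s₁m ≠ 0 := by
    intro h0
    apply hP1
    rw [← hpe, h0, smul_zero, add_zero]
  have hv0 : s₂p - s₂m ≠ 0 := by
    intro h0
    apply hQ1
    rw [← hqe, h0, smul_zero, add_zero]
  have hr0' : 0 < r := by
    rcases eq_or_lt_of_le hr0 with h' | h'
    · exfalso; apply hP1; rw [← hpe, ← h', zero_smul, add_zero]
    · exact h'
  have hr1' : r < 1 := by
    rcases eq_or_lt_of_le hr1 with h' | h'
    · exfalso; apply hP2; rw [← hpe, h', one_smul]; module
    · exact h'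
  have hρ0' : 0 < ρ := by
    rcases eq_or_lt_of_le hρ0 with h' | h'
    · exfalso; apply hQ1; rw [← hqe, ← h', zero_smul, add_zero]
    · exact h'
  have hρ1' : ρ < 1 := by
    rcases eq_or_lt_of_le hρ1 with h' | h'
    · exfalso; apply hQ2; rw [← hqe, h', one_smul]; module
    · exact h'
  set U := ‖s₁p - s₁m‖ with hUdef
  have hU : 0 < U := norm_pos_iff.mpr hu0
  set u : E3 := U⁻¹ • (s₁p - s₁m) with hudef
  have hun : ‖u‖ = 1 := norm_smul_inv_norm hu0
  have huU : U • u = s₁p - s₁m := smul_inv_smul₀ (ne_of_gt hU) _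
  set V := ‖s₂p - s₂m‖ with hVdef
  have hV : 0 < V := norm_pos_iff.mpr hv0
  set v : E3 := V⁻¹ • (s₂p - s₂m) with hvdef
  have hvn : ‖v‖ = 1 := norm_smul_inv_norm hv0
  have hvV : V • v = s₂p - s₂m := smul_inv_smul₀ (ne_of_gt hV) _
  set a := (1-r)*U with hadef
  set b := r*U with hbdef
  set c := (1-ρ)*V with hcdef
  set e := ρ*V with hedef
  have hapos : 0 < a := mul_pos (by linarith) hU
  have hbpos : 0 < b := mul_pos hr0' hU
  have hcpos : 0 < c := mul_pos (by linarith) hV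
  have hepos : 0 < e := mul_pos hρ0' hV
  have hs1p : s₁p = p + a • u := by
    rw [← hpe]
    have h' : a • u = (1-r) • (s₁p - s₁m) := by rw [hadef, mul_smul, huU]
    rw [h']; module
  have hs1m : s₁m = p - b • u := by
    rw [← hpe]
    have h' : b • u = r • (s₁p - s₁m) := by rw [hbdef, mul_smul, huU]
    rw [h']; module
  have hs2p : s₂p = q + c • v := by
    rw [← hqe]
    have h' : c • v = (1-ρ) • (s₂p - s₂m) := by rw [hcdef, mul_smul, hvV]
    rw [h']; module
  have hs2m : s₂m = q - e • v := by
    rw [← hqe]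
    have h' : e • v = ρ • (s₂p - s₂m) := by rw [hedef, mul_smul, hvV]
    rw [h']; module
  set w := q - p with hwdef
  have hwn : ‖w‖ = d := by rw [hwdef, hddef, dist_eq_norm']
  have hqseg : ∀ s : ℝ, -e ≤ s → s ≤ c → q + s • v ∈ segment ℝ s₂m s₂p := by
    intro s h1 h2; rw [hs2m, hs2p]; exact mem_seg h1 h2
  have hpseg : ∀ s : ℝ, -b ≤ s → s ≤ a → p + s • u ∈ segment ℝ s₁m s₁p := by
    intro s h1 h2; rw [hs1m, hs1p]; exact mem_seg h1 h2
  have hwu : ⟪u, w⟫ = 0 := by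
    rw [real_inner_comm]
    apply perp_of_min hbpos hapos
    intro s h1 h2
    have hm := hmin _ (hpseg s h1 h2) _ hq0
    have he1 : dist (p + s • u) q = ‖w - s • u‖ := by
      rw [dist_eq_norm, show p + s • u - q = -(w - s • u) by rw [hwdef]; module, norm_neg]
    rw [he1] at hm
    rw [hwn]
    exact pow_le_pow_left₀ hd0 hm 2
  have hwv : ⟪v, w⟫ = 0 := by
    rw [real_inner_comm]
    apply perp_of_min hcpos hepos
    intro s h1 h2
    have hm := hmin _ hp0 _ (hqseg (-s) (by linarith) (by linarith))
    have he1 : dist p (q + (-s) • v) = ‖w - s • v‖ := by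
      rw [dist_eq_norm, show p - (q + (-s) • v) = -(w - s • v) by rw [hwdef]; module, norm_neg]
    rw [he1] at hm
    rw [hwn]
    exact pow_le_pow_left₀ hd0 hm 2
  set t := (⟪u, v⟫ : ℝ) with htdef
  have ht1 : |t| ≤ 1 := by
    rw [htdef]
    calc |(⟪u, v⟫ : ℝ)| ≤ ‖u‖ * ‖v‖ := abs_real_inner_le_norm u v
      _ = 1 := by rw [hun, hvn]; ring
  have hd1 : dist s₁p s₁m = a + b := by
    rw [dist_eq_norm, hs1p, hs1m, show p + a • u - (p - b • u) = (a+b) • u by module,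
      norm_smul, hun, Real.norm_eq_abs, abs_of_pos (by linarith), mul_one]
  have hd2 : dist s₂p s₂m = c + e := by
    rw [dist_eq_norm, hs2p, hs2m, show q + c • v - (q - e • v) = (c+e) • v by module,
      norm_smul, hvn, Real.norm_eq_abs, abs_of_pos (by linarith), mul_one]
  have hstar : 2*a*e*(1-t) ≤ d^2 ∨ 2*b*c*(1-t) ≤ d^2 := by
    by_contra hcon
    push_neg at hcon
    obtain ⟨hc1, hc2⟩ := hcon
    have e1 : dist s₁p s₂m < a + e := by
      have hx : s₁p - s₂m = a • u + e • v + (-1:ℝ) • w := by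
        rw [hs1p, hs2m, hwdef]; module
      have e2 : dist s₁p s₂m ^ 2 = a^2 + e^2 + 2*a*e*t + (-1:ℝ)^2*d^2 := by
        rw [dist_eq_norm, hx, norm_comb_sq hun hvn htdef.symm hwu hwv hwn]
      have e3 : dist s₁p s₂m ^ 2 < (a+e)^2 := by nlinarith
      exact lt_of_pow_lt_pow_left₀ 2 (by positivity) e3
    have e2 : dist s₂p s₁m < b + c := by
      have hx : s₂p - s₁m = b • u + c • v + (1:ℝ) • w := by
        rw [hs2p, hs1m, hwdef]; module
      have e2' : dist s₂p s₁m ^ 2 = b^2 + c^2 + 2*b*c*t + (1:ℝ)^2*d^2 := by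
        rw [dist_eq_norm, hx, norm_comb_sq hun hvn htdef.symm hwu hwv hwn]
      have e3 : dist s₂p s₁m ^ 2 < (b+c)^2 := by nlinarith
      exact lt_of_pow_lt_pow_left₀ 2 (by positivity) e3
    rw [hd1, hd2] at h
    linarith
  rcases hstar with hkey | hkey
  · have hco := core p q u v w a b c e t d hapos.le hbpos.le hcpos.le hepos.le
      hun hvn htdef.symm ht1 hwdef hwn hwu hwv hkey
    rw [← hs1p, ← hs1m, ← hs2p, ← hs2m] at hco
    tauto
  · have hco := core p q (-u) (-v) w b a e c t d hbpos.le hapos.le hepos.le hcpos.le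
      (by rw [norm_neg]; exact hun) (by rw [norm_neg]; exact hvn)
      (by rw [inner_neg_neg]) ht1 hwdef hwn
      (by simp [inner_neg_left, hwu])
      (by simp [inner_neg_left, hwv]) hkey
    simp only [smul_neg, sub_neg_eq_add, ← sub_eq_add_neg] at hco
    rw [← hs1p, ← hs1m, ← hs2p, ← hs2m, segment_symm ℝ s₂p s₂m, segment_symm ℝ s₁p s₁m] at hco
    tauto
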